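/- Let {ξ_t}_{t≥0} be a nonnegative real sequence satisfying ξ_{t+1} ≤ (1 − b₁/(t+a))ξ_t + b₂/(t+a)² + b₃cᵗ + b₄/(t+a) for all t ≥ 0, where b₁, b₂, b₃, b₄ > 0. If b₁ ≥ 1, a > b₁ and 0 < c < 1, then for all t ≥ 0: ξ_t ≤ (c₁(ln(t+a) + 1) + 2^{b₁})/(t − 1 + a) + c₂cᵗ + 2b₄, where c₁ = (aξ₀ + 2b₂ + 2^{b₁}b₂ + b₃) c^{1−⌈1+a⌉}/(1−c)² and c₂ = 2^{b₁}b₃/c. -/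

import Mathlib

set_option maxHeartbeats 1000000 in
/-- Lemma 8 of the paper: if a nonnegative sequence `ξ` satisfies
`ξ_{t+1} ≤ (1 − b₁/(t+a))ξ_t + b₂/(t+a)² + b₃ cᵗ + b₄/(t+a)` with `b₁,…,b₄ > 0`,
`b₁ ≥ 1`, `a > b₁` and `0 < c < 1`, then for all `t ≥ 0`
`ξ_t ≤ (c₁(ln(t+a) + 1) + 2^{b₁})/(t − 1 + a) + c₂ cᵗ + 2 b₄`, where
`c₁ = (aξ₀ + 2b₂ + 2^{b₁}b₂ + b₃) c^{1−⌈1+a⌉}/(1−c)²` and `c₂ = 2^{b₁} b₃ / c`. -/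
theorem recursion_rate_estimate (a b₁ b₂ b₃ b₄ c : ℝ) (ξ : ℕ → ℝ)
    (hb₁ : 0 < b₁) (hb₂ : 0 < b₂) (hb₃ : 0 < b₃) (hb₄ : 0 < b₄)
    (hc : 0 < c) (hc1 : c < 1) (hb₁one : 1 ≤ b₁) (ha : b₁ < a)
    (hnonneg : ∀ t, 0 ≤ ξ t)
    (hrec : ∀ t : ℕ,
      ξ (t + 1) ≤ (1 - b₁ / ((t : ℝ) + a)) * ξ t + b₂ / ((t : ℝ) + a) ^ 2
        + b₃ * c ^ t + b₄ / ((t : ℝ) + a))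
    (c₁ c₂ : ℝ)
    (hc₁ : c₁ = (a * ξ 0 + 2 * b₂ + (2 : ℝ) ^ b₁ * b₂ + b₃)
        * c ^ ((1 : ℤ) - ⌈(1 : ℝ) + a⌉) / (1 - c) ^ 2)
    (hc₂ : c₂ = (2 : ℝ) ^ b₁ * b₃ / c) :
    ∀ t : ℕ,
      ξ t ≤ (c₁ * (Real.log ((t : ℝ) + a) + 1) + (2 : ℝ) ^ b₁) / ((t : ℝ) - 1 + a)
        + c₂ * c ^ t + 2 * b₄ := by
  have ha1 : (1:ℝ) < a := lt_of_le_of_lt hb₁one ha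
  set z : ℤ := (1 : ℤ) - ⌈(1 : ℝ) + a⌉ with hz
  set K : ℝ := c ^ z / (1 - c) ^ 2 with hK
  have hc1' : (0:ℝ) < 1 - c := by linarith
  -- bound on c ^ z
  have hzK : a * (1 - c) + c ≤ c ^ z := by
    have hq : (1:ℝ) + a ≤ (⌈(1 : ℝ) + a⌉ : ℝ) := Int.le_ceil _
    have hinv : (1:ℝ) ≤ c⁻¹ := (one_le_inv₀ hc).2 hc1.le
    have h0 : (c : ℝ) ^ z = c ^ ((z : ℝ)) := (Real.rpow_intCast c z).symm
    have h1 : c ^ ((z : ℝ)) = (c⁻¹) ^ (((⌈(1 : ℝ) + a⌉ : ℝ)) - 1) := by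
      rw [hz]
      push_cast
      rw [show (1 : ℝ) - (⌈(1 : ℝ) + a⌉ : ℝ) = -((⌈(1 : ℝ) + a⌉ : ℝ) - 1) by ring,
        Real.rpow_neg hc.le, ← Real.inv_rpow hc.le]
    have h2 : (c⁻¹) ^ (a : ℝ) ≤ (c⁻¹) ^ (((⌈(1 : ℝ) + a⌉ : ℝ)) - 1) :=
      Real.rpow_le_rpow_of_exponent_le hinv (by linarith)
    have h3 : 1 + a * (c⁻¹ - 1) ≤ (c⁻¹) ^ (a : ℝ) := by
      have := one_add_mul_self_le_rpow_one_add (s := c⁻¹ - 1) (by linarith) (hb₁one.trans ha.le)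
      simpa using this
    have h4 : a * (1 - c) + c ≤ 1 + a * (c⁻¹ - 1) := by
      have hinv' : c * c⁻¹ = 1 := mul_inv_cancel₀ hc.ne'
      have h6 : 1 - c ≤ c⁻¹ - 1 := by
        have : (1 - c) * c ≤ (c⁻¹ - 1) * c := by nlinarith [mul_inv_cancel₀ hc.ne' , inv_mul_cancel₀ hc.ne']
        exact le_of_mul_le_mul_right this hc
      nlinarith
    rw [h0, h1]
    exact le_trans (le_trans h4 h3) h2
  have hK1 : (1:ℝ) ≤ K := by
    have : a * (1 - c) + c ≥ 1 := by nlinarith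
    have h5 : (1 - c)^2 ≤ c ^ z := by nlinarith
    rw [hK, le_div_iff₀ (by positivity)]
    linarith
  have hKpos : 0 < K := lt_of_lt_of_le one_pos hK1
  -- geometric sum bound
  have geom : ∀ t : ℕ, ∑ s ∈ Finset.range t, (((s:ℝ) + a) * c ^ s) ≤ K := by
    intro t
    have hsummg : Summable (fun n : ℕ => c ^ n) := summable_geometric_of_lt_one hc.le hc1
    have hsumm : HasSum (fun n : ℕ => (n : ℝ) * c ^ n) (c / (1 - c) ^ 2) :=
      hasSum_coe_mul_geometric_of_norm_lt_one (by rwa [Real.norm_eq_abs, abs_of_pos hc])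
    have h1 : ∑ s ∈ Finset.range t, ((s:ℝ) * c ^ s) ≤ c / (1 - c) ^ 2 := by
      rw [← hsumm.tsum_eq]
      exact Summable.sum_le_tsum _ (fun i _ => by positivity) hsumm.summable
    have h2 : ∑ s ∈ Finset.range t, (c ^ s) ≤ 1 / (1 - c) := by
      rw [one_div, ← tsum_geometric_of_lt_one hc.le hc1]
      exact Summable.sum_le_tsum _ (fun i _ => by positivity) hsummg
    have h3 : ∑ s ∈ Finset.range t, (((s:ℝ) + a) * c ^ s)
        = ∑ s ∈ Finset.range t, ((s:ℝ) * c ^ s) + a * ∑ s ∈ Finset.range t, (c ^ s) := by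
      rw [Finset.mul_sum, ← Finset.sum_add_distrib]
      congr 1; ext s; ring
    rw [h3, hK]
    have : c / (1 - c) ^ 2 + a * (1 / (1 - c)) = (c + a * (1 - c)) / (1 - c)^2 := by
      field_simp
    have h4 : ∑ s ∈ Finset.range t, ((s:ℝ) * c ^ s) + a * ∑ s ∈ Finset.range t, (c ^ s)
        ≤ (c + a * (1 - c)) / (1 - c)^2 := by
      rw [← this]
      have := mul_le_mul_of_nonneg_left h2 (by linarith : (0:ℝ) ≤ a)
      linarith
    refine h4.trans ?_
    gcongr
    linarith
  -- harmonic sum bound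
  have harmR : ∀ u : ℕ, ∑ s ∈ Finset.range (u+1), 1/((s:ℝ)+a)
      ≤ 1 + Real.log ((u:ℝ)+a) - Real.log a := by
    intro u
    induction u with
    | zero =>
      rw [Finset.sum_range_one]
      push_cast
      rw [zero_add]
      rw [div_le_iff₀ (by linarith : (0:ℝ) < a)]
      nlinarith
    | succ u ih =>
      rw [Finset.sum_range_succ]
      have hu0 : (0:ℝ) < (u:ℝ) + a := by positivity
      have hu1 : (0:ℝ) < (u:ℝ) + 1 + a := by positivity
      have hlog : 1/((u:ℝ)+1+a) ≤ Real.log ((u:ℝ)+1+a) - Real.log ((u:ℝ)+a) := by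
        have h := Real.log_le_sub_one_of_pos (div_pos hu0 hu1)
        rw [Real.log_div hu0.ne' hu1.ne'] at h
        have harith : ((u:ℝ)+a)/((u:ℝ)+1+a) - 1 = -(1/((u:ℝ)+1+a)) := by
          field_simp
          ring
        rw [harith] at h
        linarith
      push_cast
      push_cast at ih
      linarith
  have harm : ∀ t : ℕ, ∑ s ∈ Finset.range t, 1/((s:ℝ)+a) ≤ Real.log ((t:ℝ)+a) + 1 := by
    intro t
    have hla : 0 ≤ Real.log a := Real.log_nonneg ha1.le
    cases t with
    | zero => simp; positivity
    | succ u =>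
      refine (harmR u).trans ?_
      have : Real.log ((u:ℝ)+a) ≤ Real.log ((u:ℝ)+1+a) :=
        Real.log_le_log (by positivity) (by linarith)
      push_cast
      linarith
  -- main induction
  have key : ∀ t : ℕ, ξ t ≤ (a * ξ 0 + ∑ s ∈ Finset.range t,
      (b₂ / ((s:ℝ)+a) + b₃ * ((s:ℝ)+a) * c^s + b₄)) / ((t:ℝ) - 1 + a) := by
    intro t
    induction t with
    | zero =>
      simp only [Finset.range_zero, Finset.sum_empty, add_zero, Nat.cast_zero]
      rw [le_div_iff₀ (by linarith)]
      nlinarith [hnonneg 0]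
    | succ t ih =>
      have hd : (0:ℝ) < (t:ℝ) + a := by positivity
      have he : (0:ℝ) < (t:ℝ) - 1 + a := by
        have : (0:ℝ) ≤ (t:ℝ) := Nat.cast_nonneg t
        linarith
      have hsum_nonneg : 0 ≤ ∑ s ∈ Finset.range t,
          (b₂ / ((s:ℝ)+a) + b₃ * ((s:ℝ)+a) * c^s + b₄) := by
        apply Finset.sum_nonneg
        intro s _
        have : (0:ℝ) < (s:ℝ) + a := by positivity
        positivity
      set N : ℝ := a * ξ 0 + ∑ s ∈ Finset.range t,
          (b₂ / ((s:ℝ)+a) + b₃ * ((s:ℝ)+a) * c^s + b₄) with hN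
      have hNpos : 0 ≤ N := by
        rw [hN]
        have := mul_nonneg (by linarith : (0:ℝ) ≤ a) (hnonneg 0)
        linarith
      have hcoef0 : 0 ≤ 1 - b₁ / ((t:ℝ) + a) := by
        rw [sub_nonneg, div_le_one hd]
        have : (0:ℝ) ≤ (t:ℝ) := Nat.cast_nonneg t
        linarith
      have step1 : (1 - b₁ / ((t:ℝ)+a)) * (N / ((t:ℝ) - 1 + a)) ≤ N / ((t:ℝ)+a) := by
        have hc2 : 1 - b₁ / ((t:ℝ)+a) ≤ ((t:ℝ) - 1 + a) / ((t:ℝ)+a) := by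
          rw [show (t:ℝ)-1+a = ((t:ℝ)+a)-1 by ring, ← one_sub_div hd.ne']
          gcongr
        calc (1 - b₁ / ((t:ℝ)+a)) * (N / ((t:ℝ) - 1 + a))
            ≤ (((t:ℝ) - 1 + a) / ((t:ℝ)+a)) * (N / ((t:ℝ) - 1 + a)) := by
              apply mul_le_mul_of_nonneg_right hc2 (by positivity)
          _ = N / ((t:ℝ)+a) := by field_simp
      have expand : (N + (b₂/((t:ℝ)+a) + b₃*((t:ℝ)+a)*c^t + b₄))/((t:ℝ)+a)
          = N/((t:ℝ)+a) + b₂/((t:ℝ)+a)^2 + b₃*c^t + b₄/((t:ℝ)+a) := by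
        field_simp
        ring
      have hgoal : (a * ξ 0 + ∑ s ∈ Finset.range (t+1),
            (b₂ / ((s:ℝ)+a) + b₃ * ((s:ℝ)+a) * c^s + b₄)) / ((((t:ℕ)+1:ℕ):ℝ) - 1 + a)
          = (N + (b₂/((t:ℝ)+a) + b₃*((t:ℝ)+a)*c^t + b₄))/((t:ℝ)+a) := by
        rw [Finset.sum_range_succ, hN]
        push_cast
        ring
      rw [hgoal, expand]
      calc ξ (t+1) ≤ (1 - b₁ / ((t : ℝ) + a)) * ξ t + b₂ / ((t : ℝ) + a) ^ 2
            + b₃ * c ^ t + b₄ / ((t : ℝ) + a) := hrec t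
        _ ≤ (1 - b₁ / ((t:ℝ)+a)) * (N / ((t:ℝ) - 1 + a)) + b₂ / ((t : ℝ) + a) ^ 2
            + b₃ * c ^ t + b₄ / ((t : ℝ) + a) := by
          have := mul_le_mul_of_nonneg_left ih hcoef0
          linarith
        _ ≤ N/((t:ℝ)+a) + b₂/((t:ℝ)+a)^2 + b₃*c^t + b₄/((t:ℝ)+a) := by linarith
  -- final assembly
  intro t
  have he : (0:ℝ) < (t:ℝ) - 1 + a := by
    have : (0:ℝ) ≤ (t:ℝ) := Nat.cast_nonneg t
    linarith
  set L : ℝ := Real.log ((t:ℝ) + a) with hL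
  have hLnn : 0 ≤ L := Real.log_nonneg (by
    have : (0:ℝ) ≤ (t:ℝ) := Nat.cast_nonneg t
    linarith)
  have hBpos : (0:ℝ) < (2:ℝ) ^ b₁ := Real.rpow_pos_of_pos two_pos b₁
  -- bound the numerator sum
  have sum_bound : ∑ s ∈ Finset.range t, (b₂ / ((s:ℝ)+a) + b₃ * ((s:ℝ)+a) * c^s + b₄)
      ≤ b₂ * (L + 1) + b₃ * K + b₄ * t := by
    have e2 : ∀ s : ℕ, b₂ / ((s:ℝ)+a) + b₃ * ((s:ℝ)+a) * c^s + b₄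
        = b₂ * (1/((s:ℝ)+a)) + b₃ * (((s:ℝ)+a) * c^s) + b₄ := by
      intro s; rw [mul_one_div, mul_assoc]
    rw [Finset.sum_congr rfl (fun s _ => e2 s), Finset.sum_add_distrib, Finset.sum_add_distrib,
      ← Finset.mul_sum, ← Finset.mul_sum, Finset.sum_const, Finset.card_range, nsmul_eq_mul]
    have h1 := mul_le_mul_of_nonneg_left (harm t) hb₂.le
    have h2 := mul_le_mul_of_nonneg_left (geom t) hb₃.le
    linarith
  have key' : ξ t ≤ (a * ξ 0 + (b₂ * (L + 1) + b₃ * K + b₄ * t)) / ((t:ℝ) - 1 + a) := by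
    refine (key t).trans ?_
    gcongr
  -- numerator comparison
  have hc₁K : c₁ = (a * ξ 0 + 2 * b₂ + (2 : ℝ) ^ b₁ * b₂ + b₃) * K := by
    rw [hc₁, hK]; ring
  have hnum : a * ξ 0 + (b₂ * (L + 1) + b₃ * K + b₄ * t)
      ≤ c₁ * (L + 1) + 2 * b₄ * ((t:ℝ) - 1 + a) := by
    rw [hc₁K]
    have haξ : 0 ≤ a * ξ 0 := mul_nonneg (by linarith) (hnonneg 0)
    have hKL : 1 ≤ K * (L + 1) := by
      calc (1:ℝ) ≤ L + 1 := by linarith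
        _ ≤ K * (L + 1) := le_mul_of_one_le_left (by linarith) hK1
    have hKLnn : (0:ℝ) ≤ K * (L + 1) := by linarith
    have htn : (0:ℝ) ≤ (t:ℝ) := Nat.cast_nonneg t
    have p1 : a * ξ 0 ≤ a * ξ 0 * (K * (L + 1)) := le_mul_of_one_le_right haξ hKL
    have p2 : b₂ * (L + 1) ≤ 2 * b₂ * (K * (L + 1)) := by
      nlinarith [mul_nonneg (mul_nonneg hb₂.le (sub_nonneg.2 hK1)) (by linarith : (0:ℝ) ≤ L + 1),
        mul_nonneg hb₂.le hKLnn]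
    have p3 : b₃ * K ≤ b₃ * K * (L + 1) :=
      le_mul_of_one_le_right (mul_nonneg hb₃.le hKpos.le) (by linarith)
    have p4 : b₄ * t ≤ 2 * b₄ * ((t:ℝ) - 1 + a) := by
      nlinarith [mul_nonneg hb₄.le (by linarith : (0:ℝ) ≤ (t:ℝ) + 2*a - 2)]
    have p5 : 0 ≤ (2:ℝ) ^ b₁ * b₂ * (K * (L + 1)) := by positivity
    linarith [p1, p2, p3, p4, p5]
  have final1 : ξ t ≤ c₁ * (L + 1) / ((t:ℝ) - 1 + a) + 2 * b₄ := by
    refine key'.trans ?_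
    rw [div_le_iff₀ he]
    have heq : (c₁ * (L + 1) / ((t:ℝ) - 1 + a) + 2 * b₄) * ((t:ℝ) - 1 + a)
        = c₁ * (L + 1) + 2 * b₄ * ((t:ℝ) - 1 + a) := by
      field_simp
    rw [heq]
    exact hnum
  have hc₂pos : 0 < c₂ * c ^ t := by
    rw [hc₂]; positivity
  have hB : (0:ℝ) ≤ (2:ℝ)^b₁ / ((t:ℝ) - 1 + a) := by positivity
  have : (c₁ * (L + 1) + (2:ℝ)^b₁) / ((t:ℝ) - 1 + a)
      = c₁ * (L + 1) / ((t:ℝ) - 1 + a) + (2:ℝ)^b₁ / ((t:ℝ) - 1 + a) := by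
    rw [add_div]
  rw [hL] at final1 ⊢
  linarith
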